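/- (Discrete uniform Sobolev inequality) Let h > 0 and let g : [−π, π] → ℂ be measurable with ∫_{−π}^{π} (1 + h⁻²|ξ|²) |g(ξ)|² dξ < ∞. Define u : ℤ → ℂ by the Fourier inversion formula u(n) = (1/√(2π)) ∫_{−π}^{π} g(ξ) e^{inξ} dξ. Then for every n ∈ ℤ, |u(n)| ≤ (√2/2) · ( h ∫_{−π}^{π} (1 + h⁻²|ξ|²) |g(ξ)|² dξ )^{1/2}. -/

import Mathlib

open Real MeasureTheory

/-- Discrete uniform Sobolev inequality: if `u : ℤ → ℂ` is given by Fourier inversion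
`u(n) = (2π)^{-1/2} ∫_{−π}^{π} g(ξ) e^{inξ} dξ`, then
`|u(n)| ≤ (√2/2) (h ∫_{−π}^{π} (1 + h⁻²ξ²)|g(ξ)|² dξ)^{1/2}` for all `n`, uniformly in `h > 0`. -/
theorem discrete_sobolev (h : ℝ) (hh : 0 < h) (g : ℝ → ℂ) (hg : Measurable g)
    (hint : IntegrableOn (fun ξ : ℝ => (1 + h⁻¹ ^ 2 * ξ ^ 2) * ‖g ξ‖ ^ 2)
      (Set.Icc (-π) π) volume)
    (u : ℤ → ℂ)
    (hu : ∀ n : ℤ, u n = (1 / Real.sqrt (2 * π) : ℂ) *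
      ∫ ξ in Set.Icc (-π) π, g ξ * Complex.exp (Complex.I * (n : ℂ) * (ξ : ℂ))) :
    ∀ n : ℤ, ‖u n‖ ≤ (Real.sqrt 2 / 2) *
      Real.sqrt (h * ∫ ξ in Set.Icc (-π) π, (1 + h⁻¹ ^ 2 * ξ ^ 2) * ‖g ξ‖ ^ 2) := by
  intro n
  have hπ : (0:ℝ) < π := Real.pi_pos
  set μ := volume.restrict (Set.Icc (-π) π) with hμ
  haveI : IsFiniteMeasure μ := by
    constructor
    rw [hμ, Measure.restrict_apply_univ, Real.volume_Icc]
    exact ENNReal.ofReal_lt_top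
  set w : ℝ → ℝ := fun ξ => 1 + h⁻¹ ^ 2 * ξ ^ 2 with hwdef
  have hw1 : ∀ ξ, 1 ≤ w ξ := fun ξ => by simp only [hwdef]; nlinarith [sq_nonneg (h⁻¹ * ξ), sq_nonneg ξ, sq_nonneg h⁻¹, mul_pow h⁻¹ ξ 2]
  have hwpos : ∀ ξ, 0 < w ξ := fun ξ => lt_of_lt_of_le one_pos (hw1 ξ)
  have hwcont : Continuous w := by continuity
  set B := ∫ ξ in Set.Icc (-π) π, w ξ * ‖g ξ‖ ^ 2 with hBdef
  have hB0 : 0 ≤ B := by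
    apply integral_nonneg
    intro ξ
    have := (hwpos ξ).le
    positivity
  -- Step 1: bound by integral of ‖g‖
  have h1 : ‖u n‖ ≤ (Real.sqrt (2 * π))⁻¹ * ∫ ξ in Set.Icc (-π) π, ‖g ξ‖ := by
    rw [hu n, norm_mul]
    have hc : ‖(1 / Real.sqrt (2 * π) : ℂ)‖ = (Real.sqrt (2 * π))⁻¹ := by
      rw [one_div]
      rw [norm_inv]
      norm_cast
      rw [Real.norm_of_nonneg (Real.sqrt_nonneg _)]
    rw [hc]
    apply mul_le_mul_of_nonneg_left _ (by positivity)
    refine le_trans (norm_integral_le_integral_norm _) (le_of_eq ?_)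
    apply integral_congr_ae
    filter_upwards with ξ
    rw [norm_mul]
    have : ‖Complex.exp (Complex.I * (n : ℂ) * (ξ : ℂ))‖ = 1 := by
      rw [Complex.norm_exp]
      simp [Complex.mul_re]
    rw [this, mul_one]
  -- Step 2: Cauchy–Schwarz
  set F : ℝ → ℝ := fun ξ => (Real.sqrt (w ξ))⁻¹ with hFdef
  set G : ℝ → ℝ := fun ξ => Real.sqrt (w ξ) * ‖g ξ‖ with hGdef
  have hsq : ∀ ξ, Real.sqrt (w ξ) ≠ 0 := fun ξ => (Real.sqrt_pos.2 (hwpos ξ)).ne'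
  have hFcont : Continuous F := by
    apply Continuous.inv₀ (hwcont.sqrt) hsq
  have hFmem : MemLp F (ENNReal.ofReal 2) μ := by
    rw [show ENNReal.ofReal 2 = 2 by norm_num]
    apply MemLp.of_bound hFcont.aestronglyMeasurable 1
    filter_upwards with ξ
    rw [Real.norm_of_nonneg (by positivity)]
    rw [inv_le_one_iff₀]
    right
    rw [show (1:ℝ) = Real.sqrt 1 by simp]
    exact Real.sqrt_le_sqrt (hw1 ξ)
  have hGmem : MemLp G (ENNReal.ofReal 2) μ := by
    rw [show ENNReal.ofReal 2 = 2 by norm_num]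
    have hGm : AEStronglyMeasurable G μ :=
      (hwcont.sqrt.aestronglyMeasurable).mul hg.norm.aestronglyMeasurable
    refine (memLp_two_iff_integrable_sq hGm).2 ?_
    have : (fun x => G x ^ 2) = fun ξ => w ξ * ‖g ξ‖ ^ 2 := by
      funext ξ
      rw [hGdef]
      rw [mul_pow, Real.sq_sqrt (hwpos ξ).le]
    rw [this]
    exact hint
  have hCS : ∫ ξ in Set.Icc (-π) π, ‖g ξ‖ ≤
      Real.sqrt (∫ ξ in Set.Icc (-π) π, (w ξ)⁻¹) * Real.sqrt B := by
    have key := integral_mul_le_Lp_mul_Lq_of_nonneg (μ := μ)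
      (Real.holderConjugate_iff.2 ⟨one_lt_two, by norm_num⟩)
      (Filter.Eventually.of_forall fun ξ => by positivity)
      (Filter.Eventually.of_forall fun ξ => by positivity) hFmem hGmem
    have he1 : ∀ ξ, F ξ * G ξ = ‖g ξ‖ := fun ξ => by
      rw [hFdef, hGdef, ← mul_assoc, inv_mul_cancel₀ (hsq ξ), one_mul]
    have he2 : ∀ ξ, F ξ ^ (2:ℝ) = (w ξ)⁻¹ := fun ξ => by
      rw [Real.rpow_two]
      show ((Real.sqrt (w ξ))⁻¹) ^ 2 = (w ξ)⁻¹
      rw [← Real.sqrt_inv, Real.sq_sqrt (by positivity)]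
    have he3 : ∀ ξ, G ξ ^ (2:ℝ) = w ξ * ‖g ξ‖ ^ 2 := fun ξ => by
      rw [Real.rpow_two]
      show (Real.sqrt (w ξ) * ‖g ξ‖) ^ 2 = w ξ * ‖g ξ‖ ^ 2
      rw [mul_pow, Real.sq_sqrt (hwpos ξ).le]
    simp only [he1, he2, he3] at key
    rw [Real.sqrt_eq_rpow, Real.sqrt_eq_rpow]
    simpa using key
  -- Step 3: the weight integral
  have hA : ∫ ξ in Set.Icc (-π) π, (w ξ)⁻¹ ≤ π * h := by
    rw [MeasureTheory.integral_Icc_eq_integral_Ioc,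
      ← intervalIntegral.integral_of_le (by linarith : -π ≤ π)]
    have hrw : (fun ξ => (w ξ)⁻¹) = fun ξ => (1 + (h⁻¹ * ξ) ^ 2)⁻¹ := by
      funext ξ; rw [hwdef]; ring_nf
    rw [hrw]
    rw [intervalIntegral.integral_comp_mul_left (fun x => (1 + x ^ 2)⁻¹)
      (inv_ne_zero hh.ne')]
    rw [integral_inv_one_add_sq, inv_inv, smul_eq_mul]
    have harc : Real.arctan (h⁻¹ * π) - Real.arctan (h⁻¹ * -π) ≤ π := by
      rw [mul_neg, Real.arctan_neg, sub_neg_eq_add]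
      have := (Real.arctan_lt_pi_div_two (h⁻¹ * π)).le
      linarith
    calc h * (Real.arctan (h⁻¹ * π) - Real.arctan (h⁻¹ * -π)) ≤ h * π :=
          mul_le_mul_of_nonneg_left harc hh.le
      _ = π * h := mul_comm _ _
  -- combine
  have h2 : ‖u n‖ ≤ (Real.sqrt (2 * π))⁻¹ * (Real.sqrt (π * h) * Real.sqrt B) := by
    refine le_trans h1 (mul_le_mul_of_nonneg_left (le_trans hCS ?_) (by positivity))
    exact mul_le_mul_of_nonneg_right (Real.sqrt_le_sqrt hA) (Real.sqrt_nonneg _)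
  refine le_trans h2 (le_of_eq ?_)
  rw [Real.sqrt_mul hπ.le, Real.sqrt_mul hh.le, Real.sqrt_mul (by positivity : (0:ℝ) ≤ 2)]
  have hs2 : (0:ℝ) < Real.sqrt 2 := by positivity
  have hsπ : (0:ℝ) < Real.sqrt π := Real.sqrt_pos.2 hπ
  field_simp
  have h22 : Real.sqrt 2 * Real.sqrt 2 = 2 := Real.mul_self_sqrt (by norm_num)
  linear_combination (-(Real.sqrt B)) * h22
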